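/- Let X and Y be Hilbert spaces, T : X → Y a bounded linear operator with a least-squares projection approximation {(X_n, T_n)}. Then the following three conditions are equivalent: (i) weak convergence: T_n† y ⇀ T† y weakly for every y ∈ D(T†); (ii) strong convergence: ‖T_n† y − T† y‖ → 0 for every y ∈ D(T†); (iii) uniform boundedness: sup_n ‖T_n† T‖ < +∞. Moreover, each of these conditions implies kernel approximability: N(T) = {x ∈ X : dist(x, N(T) ∩ X_n) → 0 as n → ∞}. -/

import Mathlib

open Filter Topology Metric Submodule ContinuousLinearMap

/-- Orthogonal projection onto a subspace `K` (as an operator `H →L[ℝ] H`),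
defined whenever `K` admits orthogonal projections (e.g. `K` closed). -/
noncomputable def orthProj {H : Type*} [NormedAddCommGroup H] [InnerProductSpace ℝ H]
    (K : Submodule ℝ H) : H →L[ℝ] H :=
  open scoped Classical in
  if h : HasOrthogonalProjection K then
    haveI := h
    K.subtypeL.comp (orthogonalProjectionOnto K)
  else 0

section API
variable {H : Type*} [NormedAddCommGroup H] [InnerProductSpace ℝ H]
  (K : Submodule ℝ H) [h : HasOrthogonalProjection K]

lemma orthProj_apply (x : H) : orthProj K x = (orthogonalProjection K x : H) := by
  unfold orthProj
  rw [dif_pos h]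
  rfl

lemma orthProj_mem (x : H) : orthProj K x ∈ K := by
  rw [orthProj_apply]; exact (orthogonalProjectionOnto K x).2

lemma sub_orthProj_mem (x : H) : x - orthProj K x ∈ Kᗮ := by
  rw [orthProj_apply]; exact K.sub_starProjection_mem_orthogonal x

lemma orthProj_eq_self {x : H} (hx : x ∈ K) : orthProj K x = x := by
  rw [orthProj_apply]
  exact congrArg Subtype.val (orthogonalProjection_mem_subspace_eq_self (⟨x, hx⟩ : K))

lemma orthProj_eq_zero {x : H} (hx : x ∈ Kᗮ) : orthProj K x = 0 := by
  rw [orthProj_apply, Submodule.orthogonalProjectionOnto_apply_of_mem_orthogonal hx]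
  rfl

lemma inner_orthProj (u v : H) : (inner ℝ (orthProj K u) v : ℝ) = inner ℝ u (orthProj K v) := by
  rw [orthProj_apply, orthProj_apply]
  exact K.inner_starProjection_left_eq_right u v
end API

variable {X Y : Type*} [NormedAddCommGroup X] [InnerProductSpace ℝ X] [CompleteSpace X]
  [NormedAddCommGroup Y] [InnerProductSpace ℝ Y] [CompleteSpace Y]

/-- Weak convergence ⇔ strong convergence ⇔ uniform boundedness of `Tₙ†T`;
and these imply kernel approximability. -/
theorem stmt9
    (T : X →L[ℝ] Y) (Xn : ℕ → Submodule ℝ X)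
    (hfin : ∀ n, FiniteDimensional ℝ (Xn n))
    (hinf : ¬ FiniteDimensional ℝ X)
    (hproj : ∀ x : X, Tendsto (fun n => orthProj (Xn n) x) atTop (𝓝 x))
    (Tn : ℕ → X →L[ℝ] Y) (hTn : ∀ n, Tn n = T.comp (orthProj (Xn n)))
    (Tdag : Y → X)
    (hTdag : ∀ y ∈ (LinearMap.range (T : X →ₗ[ℝ] Y) ⊔ (LinearMap.range (T : X →ₗ[ℝ] Y))ᗮ : Submodule ℝ Y),
      Tdag y ∈ (LinearMap.ker (T : X →ₗ[ℝ] Y))ᗮ ∧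
        T (Tdag y) = orthProj (LinearMap.range (T : X →ₗ[ℝ] Y)).topologicalClosure y)
    (Tdagn : ℕ → Y → X)
    (hTdagn : ∀ n (y : Y), Tdagn n y ∈ (LinearMap.ker (Tn n : X →ₗ[ℝ] Y))ᗮ ∧
      (Tn n) (Tdagn n y) = orthProj ((Xn n).map (T : X →ₗ[ℝ] Y)) y) :
    ((∀ y ∈ (LinearMap.range (T : X →ₗ[ℝ] Y) ⊔ (LinearMap.range (T : X →ₗ[ℝ] Y))ᗮ : Submodule ℝ Y), ∀ v : X,
        Tendsto (fun n => (inner ℝ (Tdagn n y) v : ℝ)) atTop (𝓝 (inner ℝ (Tdag y) v)))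
      ↔ (∀ y ∈ (LinearMap.range (T : X →ₗ[ℝ] Y) ⊔ (LinearMap.range (T : X →ₗ[ℝ] Y))ᗮ : Submodule ℝ Y),
        Tendsto (fun n => Tdagn n y) atTop (𝓝 (Tdag y)))) ∧
    ((∀ y ∈ (LinearMap.range (T : X →ₗ[ℝ] Y) ⊔ (LinearMap.range (T : X →ₗ[ℝ] Y))ᗮ : Submodule ℝ Y),
        Tendsto (fun n => Tdagn n y) atTop (𝓝 (Tdag y)))
      ↔ (∃ C : ℝ, ∀ n (x : X), ‖Tdagn n (T x)‖ ≤ C * ‖x‖)) ∧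
    ((∃ C : ℝ, ∀ n (x : X), ‖Tdagn n (T x)‖ ≤ C * ‖x‖) →
      (∀ x : X, x ∈ LinearMap.ker (T : X →ₗ[ℝ] Y) ↔
      Tendsto (fun n => Metric.infDist x ((LinearMap.ker (T : X →ₗ[ℝ] Y) ⊓ Xn n : Submodule ℝ X) : Set X))
        atTop (𝓝 0))) := by
  -- instances
  have instXn : ∀ n, HasOrthogonalProjection (Xn n) := fun n => by
    haveI := hfin n
    haveI : CompleteSpace (Xn n) := FiniteDimensional.complete ℝ (Xn n)
    infer_instance
  have finTXn : ∀ n, FiniteDimensional ℝ ((Xn n).map (T : X →ₗ[ℝ] Y)) := fun n => by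
    haveI := hfin n
    have he : (Xn n).map (T : X →ₗ[ℝ] Y) = (Xn n).map (T : X →ₗ[ℝ] Y) := rfl
    rw [he]
    infer_instance
  have instTXn : ∀ n, HasOrthogonalProjection ((Xn n).map (T : X →ₗ[ℝ] Y)) := fun n => by
    haveI := finTXn n
    haveI : CompleteSpace ((Xn n).map (T : X →ₗ[ℝ] Y)) := FiniteDimensional.complete ℝ _
    infer_instance
  haveI instR : HasOrthogonalProjection (LinearMap.range (T : X →ₗ[ℝ] Y)).topologicalClosure := by
    haveI : CompleteSpace (LinearMap.range (T : X →ₗ[ℝ] Y)).topologicalClosure :=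
      (Submodule.isClosed_topologicalClosure _).completeSpace_coe
    infer_instance
  -- Tn agrees with T on Xn
  have h1 : ∀ n, ∀ u ∈ Xn n, Tn n u = T u := fun n u hu => by
    haveI := instXn n
    rw [hTn n]
    simp only [ContinuousLinearMap.comp_apply]
    rw [orthProj_eq_self _ hu]
  have h2 : ∀ n, (LinearMap.ker (Tn n : X →ₗ[ℝ] Y))ᗮ ≤ Xn n := fun n => by
    haveI := instXn n
    have hsub : (Xn n)ᗮ ≤ LinearMap.ker (Tn n : X →ₗ[ℝ] Y) := fun u hu => by
      rw [LinearMap.mem_ker, hTn n]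
      simp only [ContinuousLinearMap.coe_coe, ContinuousLinearMap.comp_apply]
      rw [orthProj_eq_zero _ hu, map_zero]
    calc (LinearMap.ker (Tn n : X →ₗ[ℝ] Y))ᗮ ≤ (Xn n)ᗮᗮ := Submodule.orthogonal_le hsub
      _ = Xn n := (Xn n).orthogonal_orthogonal
  -- uniqueness of pseudo-solutions
  have huniq : ∀ n, ∀ u w : X, u ∈ (LinearMap.ker (Tn n : X →ₗ[ℝ] Y))ᗮ → w ∈ (LinearMap.ker (Tn n : X →ₗ[ℝ] Y))ᗮ →
      Tn n u = Tn n w → u = w := by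
    intro n u w hu hw h
    have hm : u - w ∈ LinearMap.ker (Tn n : X →ₗ[ℝ] Y) := by
      rw [LinearMap.mem_ker, ContinuousLinearMap.coe_coe, map_sub, h, sub_self]
    have hmo : u - w ∈ (LinearMap.ker (Tn n : X →ₗ[ℝ] Y))ᗮ := sub_mem hu hw
    have h0 : (inner ℝ (u - w) (u - w) : ℝ) = 0 :=
      (Submodule.mem_orthogonal _ _).mp hmo _ hm
    exact sub_eq_zero.mp (inner_self_eq_zero.mp h0)
  have hchar : ∀ n (y : Y) (u : X), u ∈ (LinearMap.ker (Tn n : X →ₗ[ℝ] Y))ᗮ →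
      Tn n u = orthProj ((Xn n).map (T : X →ₗ[ℝ] Y)) y → Tdagn n y = u := fun n y u hu h =>
    huniq n _ u (hTdagn n y).1 hu (by rw [(hTdagn n y).2, h])
  -- difference identity
  have hdiff : ∀ n (a b : X), Tdagn n (T a) - Tdagn n (T b) = Tdagn n (T (a - b)) := by
    intro n a b
    haveI := instTXn n
    refine (hchar n (T (a - b)) _ (sub_mem (hTdagn n (T a)).1 (hTdagn n (T b)).1) ?_).symm
    rw [map_sub, (hTdagn n (T a)).2, (hTdagn n (T b)).2, ← map_sub (orthProj ((Xn n).map (T : X →ₗ[ℝ] Y))),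
      ← map_sub T]
  -- strong implies weak
  have strong_weak : (∀ y ∈ (LinearMap.range (T : X →ₗ[ℝ] Y) ⊔ (LinearMap.range (T : X →ₗ[ℝ] Y))ᗮ : Submodule ℝ Y),
      Tendsto (fun n => Tdagn n y) atTop (𝓝 (Tdag y))) →
      (∀ y ∈ (LinearMap.range (T : X →ₗ[ℝ] Y) ⊔ (LinearMap.range (T : X →ₗ[ℝ] Y))ᗮ : Submodule ℝ Y), ∀ v : X,
        Tendsto (fun n => (inner ℝ (Tdagn n y) v : ℝ)) atTop (𝓝 (inner ℝ (Tdag y) v))) :=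
    fun hs y hy v => (hs y hy).inner tendsto_const_nhds
  -- bound implies strong
  have bound_strong : (∃ C : ℝ, ∀ n (x : X), ‖Tdagn n (T x)‖ ≤ C * ‖x‖) →
      ∀ y ∈ (LinearMap.range (T : X →ₗ[ℝ] Y) ⊔ (LinearMap.range (T : X →ₗ[ℝ] Y))ᗮ : Submodule ℝ Y),
        Tendsto (fun n => Tdagn n y) atTop (𝓝 (Tdag y)) := by
    rintro ⟨C, hC⟩ y hy
    obtain ⟨hx1, hx2⟩ := hTdag y hy
    set d := Tdag y with hd
    have heq : ∀ n, Tdagn n y = Tdagn n (T d) := by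
      intro n
      haveI := instTXn n
      refine hchar n y _ (hTdagn n (T d)).1 ?_
      rw [(hTdagn n (T d)).2]
      have h3 : ((Xn n).map (T : X →ₗ[ℝ] Y) : Submodule ℝ Y) ≤ (LinearMap.range (T : X →ₗ[ℝ] Y)).topologicalClosure := by
        refine le_trans ?_ (Submodule.le_topologicalClosure _)
        rintro z ⟨w, hw, rfl⟩
        exact LinearMap.mem_range_self _ w
      have hmem : y - T d ∈ ((Xn n).map (T : X →ₗ[ℝ] Y))ᗮ := by
        have hs := sub_orthProj_mem (LinearMap.range (T : X →ₗ[ℝ] Y)).topologicalClosure y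
        rw [← hx2] at hs
        exact Submodule.orthogonal_le h3 hs
      have hz := orthProj_eq_zero ((Xn n).map (T : X →ₗ[ℝ] Y)) hmem
      rw [map_sub] at hz
      exact (sub_eq_zero.mp hz).symm
    have hb : ∀ n, ‖Tdagn n y - d‖ ≤ (C + 1) * ‖d - orthProj (Xn n) d‖ := by
      intro n
      haveI := instXn n
      haveI := instTXn n
      set v := orthProj (Xn n) d with hv
      have hvXn : v ∈ Xn n := orthProj_mem _ d
      have hvk : v ∈ (LinearMap.ker (Tn n : X →ₗ[ℝ] Y))ᗮ := by
        rw [Submodule.mem_orthogonal]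
        intro u hu
        have hPu : orthProj (Xn n) u ∈ LinearMap.ker (T : X →ₗ[ℝ] Y) := by
          rw [LinearMap.mem_ker] at hu ⊢
          rw [hTn n] at hu
          simpa using hu
        calc (inner ℝ u v : ℝ) = inner ℝ (orthProj (Xn n) u) d := (inner_orthProj _ u d).symm
          _ = 0 := (Submodule.mem_orthogonal _ _).mp hx1 _ hPu
      have hvfix : Tdagn n (T v) = v := by
        refine hchar n (T v) v hvk ?_
        rw [h1 n v hvXn]
        exact (orthProj_eq_self _ (Submodule.mem_map_of_mem hvXn)).symm
      have key : Tdagn n y - d = Tdagn n (T (d - v)) + (v - d) := by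
        rw [heq n, ← hdiff n d v, hvfix]
        abel
      rw [key]
      calc ‖Tdagn n (T (d - v)) + (v - d)‖ ≤ ‖Tdagn n (T (d - v))‖ + ‖v - d‖ := norm_add_le _ _
        _ ≤ C * ‖d - v‖ + ‖v - d‖ := add_le_add_left (hC n _) _
        _ = (C + 1) * ‖d - v‖ := by rw [norm_sub_rev v d]; ring
    have hz : Tendsto (fun n => (C + 1) * ‖d - orthProj (Xn n) d‖) atTop (𝓝 0) := by
      have hn : Tendsto (fun n => ‖d - orthProj (Xn n) d‖) atTop (𝓝 0) := by
        have hp := (tendsto_iff_norm_sub_tendsto_zero).mp (hproj d)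
        simpa [norm_sub_rev] using hp
      simpa using hn.const_mul (C + 1)
    have hfin' : Tendsto (fun n => ‖Tdagn n y - d‖) atTop (𝓝 0) :=
      squeeze_zero (fun n => norm_nonneg _) hb hz
    exact tendsto_iff_norm_sub_tendsto_zero.mpr hfin'
  -- the operators Tdagn n ∘ T as continuous linear maps
  have hRn : ∀ n, ∃ R : X →L[ℝ] X, ∀ x, R x = Tdagn n (T x) := by
    intro n
    haveI := instTXn n
    haveI := finTXn n
    let L : ((Xn n).map (T : X →ₗ[ℝ] Y) : Submodule ℝ Y) →ₗ[ℝ] X :=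
      { toFun := fun z => Tdagn n (z : Y)
        map_add' := by
          intro a b
          show Tdagn n ↑(a + b) = Tdagn n ↑a + Tdagn n ↑b
          refine hchar n (↑(a + b)) _ (add_mem (hTdagn n ↑a).1 (hTdagn n ↑b).1) ?_
          rw [map_add, (hTdagn n ↑a).2, (hTdagn n ↑b).2, Submodule.coe_add, map_add]
        map_smul' := by
          intro c a
          show Tdagn n ↑(c • a) = c • Tdagn n ↑a
          refine hchar n (↑(c • a)) _ (Submodule.smul_mem _ c (hTdagn n ↑a).1) ?_
          rw [map_smul, (hTdagn n ↑a).2, Submodule.coe_smul, map_smul] }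
    refine ⟨(LinearMap.toContinuousLinearMap L).comp
      ((orthogonalProjection ((Xn n).map (T : X →ₗ[ℝ] Y))).comp T), fun x => ?_⟩
    show Tdagn n ↑(orthogonalProjection ((Xn n).map (T : X →ₗ[ℝ] Y)) (T x)) = Tdagn n (T x)
    refine (hchar n (T x) _ (hTdagn n _).1 ?_).symm
    rw [(hTdagn n _).2, orthProj_eq_self _ (Subtype.coe_prop _)]
    exact (orthProj_apply _ (T x)).symm
  -- weak implies bound (Banach–Steinhaus)
  have weak_bound : (∀ y ∈ (LinearMap.range (T : X →ₗ[ℝ] Y) ⊔ (LinearMap.range (T : X →ₗ[ℝ] Y))ᗮ : Submodule ℝ Y), ∀ v : X,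
      Tendsto (fun n => (inner ℝ (Tdagn n y) v : ℝ)) atTop (𝓝 (inner ℝ (Tdag y) v))) →
      ∃ C : ℝ, ∀ n (x : X), ‖Tdagn n (T x)‖ ≤ C * ‖x‖ := by
    intro hw
    choose R hR using hRn
    have hpt : ∀ x : X, ∃ M, ∀ n, ‖R n x‖ ≤ M := by
      intro x
      have hyD : T x ∈ (LinearMap.range (T : X →ₗ[ℝ] Y) ⊔ (LinearMap.range (T : X →ₗ[ℝ] Y))ᗮ : Submodule ℝ Y) :=
        Submodule.mem_sup_left (LinearMap.mem_range_self _ x)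
      have h1' : ∀ v : X, ∃ M, ∀ n, ‖(innerSL ℝ (R n x)) v‖ ≤ M := by
        intro v
        have ht := hw (T x) hyD v
        obtain ⟨M, hM⟩ := ht.norm.bddAbove_range
        exact ⟨M, fun n => by
          simpa only [innerSL_apply_apply, hR] using hM (Set.mem_range_self n)⟩
      obtain ⟨M, hM⟩ := banach_steinhaus h1'
      exact ⟨M, fun n => by simpa [innerSL_apply_norm] using hM n⟩
    obtain ⟨C, hC⟩ := banach_steinhaus hpt
    refine ⟨C, fun n x => ?_⟩
    rw [← hR n x]
    calc ‖R n x‖ ≤ ‖R n‖ * ‖x‖ := (R n).le_opNorm x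
      _ ≤ C * ‖x‖ := mul_le_mul_of_nonneg_right (hC n) (norm_nonneg x)
  refine ⟨⟨fun hw => bound_strong (weak_bound hw), strong_weak⟩,
    ⟨fun hs => weak_bound (strong_weak hs), bound_strong⟩, ?_⟩
  -- kernel approximability
  rintro ⟨C, hC⟩ x
  constructor
  · intro hx
    have hTx : T x = 0 := hx
    have hb : ∀ n, Metric.infDist x ((LinearMap.ker (T : X →ₗ[ℝ] Y) ⊓ Xn n : Submodule ℝ X) : Set X)
        ≤ (1 + C) * ‖x - orthProj (Xn n) x‖ := by
      intro n
      haveI := instXn n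
      haveI := instTXn n
      set p := orthProj (Xn n) x with hp
      set u := Tdagn n (T p) with hu
      have huk := (hTdagn n (T p)).1
      have huXn : u ∈ Xn n := h2 n huk
      have hTu : T u = T p := by
        rw [← h1 n u huXn, (hTdagn n (T p)).2]
        exact orthProj_eq_self _ (Submodule.mem_map_of_mem (orthProj_mem _ x))
      have hwmem : p - u ∈ (LinearMap.ker (T : X →ₗ[ℝ] Y) ⊓ Xn n : Submodule ℝ X) := by
        refine Submodule.mem_inf.mpr ⟨?_, sub_mem (orthProj_mem _ x) huXn⟩
        rw [LinearMap.mem_ker, ContinuousLinearMap.coe_coe, map_sub, hTu, sub_self]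
      have hnu : ‖u‖ ≤ C * ‖p - x‖ := by
        have hTp : T p = T (p - x) := by rw [map_sub, hTx, sub_zero]
        rw [hu, hTp]
        exact hC n _
      calc Metric.infDist x ((LinearMap.ker (T : X →ₗ[ℝ] Y) ⊓ Xn n : Submodule ℝ X) : Set X)
          ≤ dist x (p - u) := Metric.infDist_le_dist_of_mem hwmem
        _ = ‖(x - p) + u‖ := by rw [dist_eq_norm]; congr 1; abel
        _ ≤ ‖x - p‖ + ‖u‖ := norm_add_le _ _
        _ ≤ ‖x - p‖ + C * ‖p - x‖ := add_le_add_right hnu _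
        _ = (1 + C) * ‖x - p‖ := by rw [norm_sub_rev p x]; ring
    refine squeeze_zero (fun n => Metric.infDist_nonneg) hb ?_
    have hn : Tendsto (fun n => ‖x - orthProj (Xn n) x‖) atTop (𝓝 0) := by
      have hp := (tendsto_iff_norm_sub_tendsto_zero).mp (hproj x)
      simpa [norm_sub_rev] using hp
    simpa using hn.const_mul (1 + C)
  · intro h
    have hne : ∀ n, ((LinearMap.ker (T : X →ₗ[ℝ] Y) ⊓ Xn n : Submodule ℝ X) : Set X).Nonempty :=
      fun n => ⟨0, Submodule.zero_mem _⟩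
    have hle : ∀ n, Metric.infDist x ((LinearMap.ker (T : X →ₗ[ℝ] Y) : Submodule ℝ X) : Set X)
        ≤ Metric.infDist x ((LinearMap.ker (T : X →ₗ[ℝ] Y) ⊓ Xn n : Submodule ℝ X) : Set X) :=
      fun n => Metric.infDist_le_infDist_of_subset
        (fun z hz => (Submodule.mem_inf.mp hz).1) (hne n)
    have h0 : Metric.infDist x ((LinearMap.ker (T : X →ₗ[ℝ] Y) : Submodule ℝ X) : Set X) ≤ 0 :=
      ge_of_tendsto h (Filter.Eventually.of_forall hle)
    have hz : Metric.infDist x ((LinearMap.ker (T : X →ₗ[ℝ] Y) : Submodule ℝ X) : Set X) = 0 :=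
      le_antisymm h0 Metric.infDist_nonneg
    have hcl : IsClosed ((LinearMap.ker (T : X →ₗ[ℝ] Y) : Submodule ℝ X) : Set X) :=
      ContinuousLinearMap.isClosed_ker T
    exact (hcl.mem_iff_infDist_zero ⟨0, Submodule.zero_mem _⟩).mpr hz
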